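/- Let n be a positive natural number, let A be an n × n matrix with rational entries, and let d : {1,…,n} → ℕ be such that d_i ≥ 1 and (d_i : ℚ) · A_{i,j} is an integer for all i, j (so d_i clears the denominators of row i). Assume moreover that every row of A has ℓ¹-norm at most 1, i.e. ∑_{j} |A_{i,j}| ≤ 1 for each i. Then (∏_{i} d_i) · det(I − A) is an integer, and its absolute value is at most ∏_{i} (2 d_i). -/
import Mathlib

open Finset

lemma abs_det_le_prod_colsum {n : ℕ} (M : Matrix (Fin n) (Fin n) ℚ) :
    |M.det| ≤ ∏ j, ∑ i, |M i j| := by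
  rw [Matrix.det_apply]
  refine (Finset.abs_sum_le_sum_abs _ _).trans ?_
  have key : ∀ σ : Equiv.Perm (Fin n),
      |Equiv.Perm.sign σ • ∏ i, M (σ i) i| = ∏ i, |M (σ i) i| := by
    intro σ
    rw [Units.smul_def, zsmul_eq_mul, abs_mul, Finset.abs_prod]
    have : |((Equiv.Perm.sign σ : ℤ) : ℚ)| = 1 := by
      rcases Int.units_eq_one_or (Equiv.Perm.sign σ) with h | h <;> rw [h] <;> norm_num
    rw [this, one_mul]
  simp_rw [key]
  have hrhs : (∏ j, ∑ i, |M i j|) =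
      ∑ f ∈ Fintype.piFinset (fun _ : Fin n => (Finset.univ : Finset (Fin n))),
        ∏ j, |M (f j) j| := Finset.prod_univ_sum _ _
  rw [hrhs]
  calc ∑ σ : Equiv.Perm (Fin n), ∏ i, |M (σ i) i|
      = ∑ f ∈ Finset.univ.image (fun σ : Equiv.Perm (Fin n) => (σ : Fin n → Fin n)),
          ∏ i, |M (f i) i| := by
        rw [Finset.sum_image]
        intro a _ b _ h
        exact Equiv.coe_fn_injective h
    _ ≤ _ := by
        apply Finset.sum_le_sum_of_subset_of_nonneg
        · intro f _; simp
        · intro f _ _; exact Finset.prod_nonneg fun i _ => abs_nonneg _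



/-- If `d i` clears the denominators of row `i` of the rational matrix `A`, with
`d i ≥ 1`, and every row of `A` has ℓ¹-norm at most 1, then
`(∏ i, d i) * det (I - A)` is an integer of absolute value at most `∏ i, 2 * d i`. -/
theorem prod_den_mul_det_one_sub_isInt_and_bounded (n : ℕ) (hn : 0 < n)
    (A : Matrix (Fin n) (Fin n) ℚ) (d : Fin n → ℕ)
    (hd : ∀ i, 1 ≤ d i)
    (hden : ∀ i j, ∃ z : ℤ, (d i : ℚ) * A i j = z)
    (hrow : ∀ i : Fin n, ∑ j : Fin n, |A i j| ≤ 1) :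
    (∃ z : ℤ, (∏ i : Fin n, (d i : ℚ)) * ((1 : Matrix (Fin n) (Fin n) ℚ) - A).det = z) ∧
      |(∏ i : Fin n, (d i : ℚ)) * ((1 : Matrix (Fin n) (Fin n) ℚ) - A).det|
        ≤ ∏ i : Fin n, (2 * d i : ℚ) := by
  set M := (1 : Matrix (Fin n) (Fin n) ℚ) - A with hM
  constructor
  · choose zA hzA using hden
    refine ⟨(Matrix.diagonal (fun i => (d i : ℤ)) - Matrix.of zA).det, ?_⟩
    have hdiag : Matrix.diagonal (fun i => (d i : ℚ)) * M
        = ((Matrix.diagonal (fun i => (d i : ℤ)) - Matrix.of zA).map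
            (Int.cast : ℤ → ℚ)) := by
      ext i j
      simp only [Matrix.diagonal_mul, Matrix.map_apply, Matrix.sub_apply,
        Matrix.diagonal_apply, Matrix.of_apply, hM, Matrix.one_apply, Int.cast_sub]
      rw [← hzA i j]
      by_cases h : i = j <;> simp [h] <;> ring
    have := congrArg Matrix.det hdiag
    rw [Matrix.det_mul, Matrix.det_diagonal] at this
    rw [this]
    exact (RingHom.map_det (Int.castRingHom ℚ) _).symm
  · have hcol : |M.det| ≤ ∏ i, ∑ j, |M i j| := by
      have h := abs_det_le_prod_colsum M.transpose
      rwa [Matrix.det_transpose] at h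
    have hrow2 : ∀ i, ∑ j, |M i j| ≤ 2 := by
      intro i
      have : ∑ j, |M i j| ≤ ∑ j, ((if i = j then (1:ℚ) else 0) + |A i j|) := by
        apply Finset.sum_le_sum
        intro j _
        simp only [hM, Matrix.sub_apply, Matrix.one_apply]
        refine (abs_sub _ _).trans ?_
        by_cases h : i = j <;> simp [h]
      rw [Finset.sum_add_distrib, Finset.sum_ite_eq (Finset.univ) i (fun _ => (1:ℚ))] at this
      simp at this
      linarith [hrow i]
    calc |(∏ i : Fin n, (d i : ℚ)) * M.det|
        = (∏ i : Fin n, (d i : ℚ)) * |M.det| := by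
          rw [abs_mul, abs_of_nonneg (Finset.prod_nonneg fun i _ => by positivity)]
      _ ≤ (∏ i : Fin n, (d i : ℚ)) * ∏ i, ∑ j, |M i j| := by
          apply mul_le_mul_of_nonneg_left hcol (Finset.prod_nonneg fun i _ => by positivity)
      _ ≤ (∏ i : Fin n, (d i : ℚ)) * ∏ i : Fin n, (2:ℚ) := by
          apply mul_le_mul_of_nonneg_left
          · exact Finset.prod_le_prod (fun i _ => Finset.sum_nonneg fun j _ => abs_nonneg _)
              (fun i _ => hrow2 i)
          · exact Finset.prod_nonneg fun i _ => by positivity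
      _ = ∏ i : Fin n, (2 * d i : ℚ) := by
          rw [← Finset.prod_mul_distrib]
          exact Finset.prod_congr rfl fun i _ => by ring
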